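/- Let (X, 𝔅, μ) be a σ-finite measure space and let 𝓔 be a Dirichlet form on L²(μ). Then 𝓔 is lower semicontinuous on its domain with respect to local convergence in μ-measure: for every net (f_i) in D(𝓔) and every f ∈ D(𝓔), if (f_i) converges to f locally in μ-measure then 𝓔(f) ≤ liminf_i 𝓔(f_i). (Consequently 𝓔 is closable on L⁰(μ); its closure is the extended Dirichlet form 𝓔_e.) -/

import Mathlib

open Filter MeasureTheory Topology
open scoped ENNReal

/-- Local convergence in `μ`-measure of a net (indexed by `ι`, along the filter `l`)
of functions `F i : X → ℝ` to `f : X → ℝ`. -/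
def TendstoLocInMeasure {X : Type*} [MeasurableSpace X] (μ : Measure X)
    {ι : Type*} (l : Filter ι) (F : ι → X → ℝ) (f : X → ℝ) : Prop :=
  ∀ U : Set X, MeasurableSet U → μ U < ⊤ → ∀ ε : ℝ, 0 < ε →
    Tendsto (fun i => μ (U ∩ {x | ε ≤ |F i x - f x|})) l (𝓝 0)

/-- A Dirichlet form on `L²(μ)`: a map `E : (X → ℝ) → [0,∞]` which (1) only depends on
`μ`-equivalence classes, (2) is a quadratic form, (3) has square-integrable domain,
(4) is lower semicontinuous with respect to `L²(μ)`-convergence of nets of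
square-integrable functions, and (5) satisfies `E (C ∘ f) ≤ E f` for every normal
contraction `C : ℝ → ℝ`. -/
def IsDirichletForm {X : Type*} [MeasurableSpace X] (μ : Measure X)
    (E : (X → ℝ) → ℝ≥0∞) : Prop :=
  (∀ f g : X → ℝ, f =ᵐ[μ] g → E f = E g) ∧
  (∀ f g : X → ℝ, 2 * E f + 2 * E g = E (f + g) + E (f - g)) ∧
  (∀ (c : ℝ) (f : X → ℝ), E (c • f) = ENNReal.ofReal (c ^ 2) * E f) ∧
  (∀ f : X → ℝ, E f < ⊤ → ∫⁻ x, ENNReal.ofReal (f x ^ 2) ∂μ < ⊤) ∧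
  (∀ (ι : Type*) [Preorder ι] [IsDirected ι (· ≤ ·)] [Nonempty ι]
    (F : ι → X → ℝ) (f : X → ℝ),
      (∀ i, ∫⁻ x, ENNReal.ofReal (F i x ^ 2) ∂μ < ⊤) →
      (∫⁻ x, ENNReal.ofReal (f x ^ 2) ∂μ < ⊤) →
      Tendsto (fun i => ∫⁻ x, ENNReal.ofReal ((F i x - f x) ^ 2) ∂μ) atTop (𝓝 0) →
      E f ≤ liminf (fun i => E (F i)) atTop) ∧
  (∀ C : ℝ → ℝ, C 0 = 0 → (∀ x y : ℝ, |C x - C y| ≤ |x - y|) →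
    ∀ f : X → ℝ, E (C ∘ f) ≤ E f)

universe u v

set_option linter.unusedSectionVars false
set_option maxHeartbeats 1000000


/-- Dominated convergence to zero for the (lower) Lebesgue integral of arbitrary
(possibly non-measurable) functions. -/
lemma ldct0 {X : Type*} [MeasurableSpace X] {μ : Measure X}
    {f : ℕ → X → ℝ≥0∞} {g : X → ℝ≥0∞}
    (hdom : ∀ n, ∀ x, f n x ≤ g x) (hg : ∫⁻ x, g x ∂μ < ⊤)
    (h0 : ∀ᵐ x ∂μ, Tendsto (fun n => f n x) atTop (𝓝 0)) :
    Tendsto (fun n => ∫⁻ x, f n x ∂μ) atTop (𝓝 0) := by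
  choose φ hφm hφle hφint using fun n => exists_measurable_le_lintegral_eq μ (f n)
  have hS : ∀ x, (⨆ n, φ n x) ≤ g x := fun x => iSup_le fun n => (hφle n x).trans (hdom n x)
  have hSm : Measurable fun x => ⨆ n, φ n x := Measurable.iSup hφm
  have hSint : ∫⁻ x, (⨆ n, φ n x) ∂μ ≠ ⊤ :=
    ((lintegral_mono hS).trans_lt hg).ne
  have hφ0 : ∀ᵐ x ∂μ, Tendsto (fun n => φ n x) atTop (𝓝 0) := by
    filter_upwards [h0] with x hx
    exact tendsto_of_tendsto_of_tendsto_of_le_of_le tendsto_const_nhds hx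
      (fun n => zero_le) (fun n => hφle n x)
  have := tendsto_lintegral_of_dominated_convergence (fun x => ⨆ n, φ n x) hφm
    (fun n => Filter.Eventually.of_forall (fun x => le_iSup (fun m => φ m x) n)) hSint hφ0
  simpa only [lintegral_zero, fun n => hφint n] using this


lemma lsc_seq {X : Type u} [MeasurableSpace X] {μ : Measure X} {E : (X → ℝ) → ℝ≥0∞}
    (h5 : ∀ (κ : Type v) [Preorder κ] [IsDirected κ (· ≤ ·)] [Nonempty κ]
      (F : κ → X → ℝ) (f : X → ℝ),
      (∀ i, ∫⁻ x, ENNReal.ofReal (F i x ^ 2) ∂μ < ⊤) →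
      (∫⁻ x, ENNReal.ofReal (f x ^ 2) ∂μ < ⊤) →
      Tendsto (fun i => ∫⁻ x, ENNReal.ofReal ((F i x - f x) ^ 2) ∂μ) atTop (𝓝 0) →
      E f ≤ liminf (fun i => E (F i)) atTop)
    (G : ℕ → X → ℝ) (f : X → ℝ)
    (hG : ∀ n, ∫⁻ x, ENNReal.ofReal (G n x ^ 2) ∂μ < ⊤)
    (hfL : ∫⁻ x, ENNReal.ofReal (f x ^ 2) ∂μ < ⊤)
    (ht : Tendsto (fun n => ∫⁻ x, ENNReal.ofReal ((G n x - f x) ^ 2) ∂μ) atTop (𝓝 0)) :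
    E f ≤ liminf (fun n => E (G n)) atTop := by
  have hdown : Tendsto (fun i : ULift.{v} ℕ => i.down) atTop atTop := by
    rw [tendsto_atTop_atTop]; exact fun b => ⟨ULift.up b, fun a ha => ha⟩
  have h := h5 (ULift.{v} ℕ) (fun i => G i.down) f (fun i => hG i.down) hfL (ht.comp hdown)
  refine h.trans ?_
  rw [liminf_eq, liminf_eq]
  apply sSup_le_sSup
  intro a ha
  obtain ⟨i₀, hi₀⟩ := eventually_atTop.1 ha
  exact eventually_atTop.2 ⟨i₀.down, fun n hn => hi₀ (ULift.up n) hn⟩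



inductive MidClosure {Z : Type u} (s : Set (Z → ℝ)) : (Z → ℝ) → Prop
  | base {h : Z → ℝ} : h ∈ s → MidClosure s h
  | mid {a b : Z → ℝ} : MidClosure s a → MidClosure s b → MidClosure s ((2⁻¹ : ℝ) • (a + b))

lemma MidClosure.mono {Z : Type u} {s u : Set (Z → ℝ)} (hsu : s ⊆ u) {h : Z → ℝ}
    (hh : MidClosure s h) : MidClosure u h := by
  induction hh with
  | base hb => exact MidClosure.base (hsu hb)
  | mid _ _ iha ihb => exact MidClosure.mid iha ihb

section DirForm

set_option linter.unusedSectionVars false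
variable {X : Type u} [MeasurableSpace X] {E : (X → ℝ) → ℝ≥0∞}

lemma E_neg (hsmul : ∀ (c : ℝ) (f : X → ℝ), E (c • f) = ENNReal.ofReal (c ^ 2) * E f)
    (u : X → ℝ) : E (-u) = E u := by
  have h := hsmul (-1) u
  simpa using h

lemma E_abs
    (hcontr : ∀ C : ℝ → ℝ, C 0 = 0 → (∀ x y : ℝ, |C x - C y| ≤ |x - y|) →
      ∀ f : X → ℝ, E (C ∘ f) ≤ E f)
    (u : X → ℝ) : E (fun x => |u x|) ≤ E u :=
  hcontr abs abs_zero (fun x y => abs_abs_sub_abs_le_abs_sub x y) u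

lemma E_add_le (hpar : ∀ f g : X → ℝ, 2 * E f + 2 * E g = E (f + g) + E (f - g))
    (u w : X → ℝ) : E (u + w) ≤ 2 * E u + 2 * E w := by
  rw [hpar u w]; exact le_self_add

lemma E_half (hsmul : ∀ (c : ℝ) (f : X → ℝ), E (c • f) = ENNReal.ofReal (c ^ 2) * E f)
    (z : X → ℝ) : 4 * E ((2⁻¹ : ℝ) • z) = E z := by
  rw [hsmul]
  have h1 : ((2:ℝ)⁻¹ ^ 2) = (4:ℝ)⁻¹ := by norm_num
  rw [h1, ← mul_assoc]
  have h2 : (4 : ℝ≥0∞) * ENNReal.ofReal (4:ℝ)⁻¹ = 1 := by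
    rw [show (4 : ℝ≥0∞) = ENNReal.ofReal 4 by norm_num, ← ENNReal.ofReal_mul (by norm_num)]
    norm_num
  rw [h2, one_mul]

lemma E_submod (hpar : ∀ f g : X → ℝ, 2 * E f + 2 * E g = E (f + g) + E (f - g))
    (hsmul : ∀ (c : ℝ) (f : X → ℝ), E (c • f) = ENNReal.ofReal (c ^ 2) * E f)
    (hcontr : ∀ C : ℝ → ℝ, C 0 = 0 → (∀ x y : ℝ, |C x - C y| ≤ |x - y|) →
      ∀ f : X → ℝ, E (C ∘ f) ≤ E f)
    (u w : X → ℝ) :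
    E (fun x => max (u x) (w x)) + E (fun x => min (u x) (w x)) ≤ E u + E w := by
  set q : X → ℝ := fun x => |u x - w x| with hq_def
  have hq : E q ≤ E (u - w) := E_abs hcontr (u - w)
  have hmax : (fun x => max (u x) (w x)) = (2⁻¹ : ℝ) • (u + w + q) := by
    funext x
    simp only [Pi.smul_apply, Pi.add_apply, smul_eq_mul, hq_def]
    rcases le_total (u x) (w x) with h | h
    · rw [max_eq_right h, abs_of_nonpos (sub_nonpos.2 h)]; ring
    · rw [max_eq_left h, abs_of_nonneg (sub_nonneg.2 h)]; ring
  have hmin : (fun x => min (u x) (w x)) = (2⁻¹ : ℝ) • (u + w - q) := by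
    funext x
    simp only [Pi.smul_apply, Pi.add_apply, Pi.sub_apply, smul_eq_mul, hq_def]
    rcases le_total (u x) (w x) with h | h
    · rw [min_eq_left h, abs_of_nonpos (sub_nonpos.2 h)]; ring
    · rw [min_eq_right h, abs_of_nonneg (sub_nonneg.2 h)]; ring
  have key : (4 : ℝ≥0∞) * (E (fun x => max (u x) (w x)) + E (fun x => min (u x) (w x)))
      = E (u + w + q) + E (u + w - q) := by
    rw [mul_add, hmax, hmin, E_half hsmul, E_half hsmul]
  have h2 : E (u + w + q) + E (u + w - q) = 2 * E (u + w) + 2 * E q := (hpar (u + w) q).symm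
  have h3 : 2 * E (u + w) + 2 * E q ≤ 2 * E (u + w) + 2 * E (u - w) := by
    gcongr
  have h4 : 2 * E (u + w) + 2 * E (u - w) = 4 * (E u + E w) := by
    have := hpar u w
    calc 2 * E (u + w) + 2 * E (u - w) = 2 * (E (u + w) + E (u - w)) := by ring
    _ = 2 * (2 * E u + 2 * E w) := by rw [← this]
    _ = 4 * (E u + E w) := by ring
  have : (4 : ℝ≥0∞) * (E (fun x => max (u x) (w x)) + E (fun x => min (u x) (w x)))
      ≤ 4 * (E u + E w) := by
    rw [key, h2, ← h4]; exact h3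
  exact (ENNReal.mul_le_mul_iff_right (by norm_num) (by norm_num)).1 this



/-- If `α - m c + m² β ≥ 0` for all naturals `m`, with `α, β ≥ 0`,
then `c ≤ 2 √(αβ) + β`. -/
lemma quad_bound {α β c : ℝ} (hα : 0 ≤ α) (hβ : 0 ≤ β)
    (h : ∀ m : ℕ, 0 ≤ α - m * c + m ^ 2 * β) :
    c ≤ 2 * Real.sqrt (α * β) + β := by
  rcases eq_or_lt_of_le hβ with hβ0 | hβpos
  · -- β = 0 : c ≤ 0
    have hc : c ≤ 0 := by
      by_contra hc
      push_neg at hc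
      obtain ⟨m, hm⟩ := exists_nat_gt (α / c)
      have hm' := h m
      rw [← hβ0] at hm'
      have : α < m * c := by
        rw [div_lt_iff₀ hc] at hm
        linarith
      nlinarith
    have : 0 ≤ Real.sqrt (α * β) := Real.sqrt_nonneg _
    linarith
  · rcases eq_or_lt_of_le hα with hα0 | hαpos
    · -- α = 0 : use m = 1
      have h1 := h 1
      rw [← hα0] at h1
      have ht : 0 ≤ Real.sqrt (α * β) := Real.sqrt_nonneg _
      push_cast at h1
      linarith
    · set s := Real.sqrt (α / β) with hs_def
      set t := Real.sqrt (α * β) with ht_def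
      have hspos : 0 < s := Real.sqrt_pos.2 (div_pos hαpos hβpos)
      have htpos : 0 < t := Real.sqrt_pos.2 (mul_pos hαpos hβpos)
      have hs2 : s ^ 2 = α / β := Real.sq_sqrt (le_of_lt (div_pos hαpos hβpos))
      have ht2 : t ^ 2 = α * β := Real.sq_sqrt (le_of_lt (mul_pos hαpos hβpos))
      have hsβ : s * β = t := by
        have h1 : (s * β) ^ 2 = t ^ 2 := by
          rw [ht2, mul_pow, hs2]; field_simp
        have h2 : 0 ≤ s * β := by positivity
        nlinarith [sq_nonneg (s * β - t), sq_nonneg (s * β + t)]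
      have hst : s * t = α := by
        have h1 : (s * t) ^ 2 = α ^ 2 := by
          rw [mul_pow, hs2, ht2]; field_simp
        have h2 : 0 ≤ s * t := by positivity
        nlinarith [sq_nonneg (s * t - α), sq_nonneg (s * t + α)]
      set m : ℕ := ⌈s⌉₊ with hm_def
      have hms : s ≤ (m : ℝ) := Nat.le_ceil s
      have hms1 : (m : ℝ) ≤ s + 1 := le_of_lt (Nat.ceil_lt_add_one (le_of_lt hspos))
      have hm1 : 1 ≤ (m : ℝ) := by
        have : (1 : ℕ) ≤ m := Nat.one_le_ceil_iff.2 hspos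
        exact_mod_cast this
      have hmc : (m : ℝ) * c ≤ α + m ^ 2 * β := by have := h m; linarith
      have key : (m : ℝ) * c ≤ (m : ℝ) * (2 * t + β) := by
        have hm2 : (m:ℝ) ^ 2 * β ≤ (m:ℝ) * t + (m:ℝ) * β := by
          have : (m:ℝ) ^ 2 * β = (m:ℝ) * ((m:ℝ) * β) := by ring
          rw [this]
          have : (m:ℝ) * β ≤ (s + 1) * β := by nlinarith
          calc (m:ℝ) * ((m:ℝ) * β) ≤ (m:ℝ) * ((s+1) * β) := by nlinarith
          _ = (m:ℝ) * (t + β) := by rw [add_mul, one_mul, hsβ]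
          _ = (m:ℝ) * t + (m:ℝ) * β := by ring
        have hα_le : α ≤ (m:ℝ) * t := by rw [← hst]; nlinarith
        calc (m : ℝ) * c ≤ α + m ^ 2 * β := hmc
        _ ≤ (m:ℝ) * t + ((m:ℝ) * t + (m:ℝ) * β) := by linarith
        _ = (m : ℝ) * (2 * t + β) := by ring
      have hmpos : (0:ℝ) < m := by linarith
      exact le_of_mul_le_mul_left (by linarith [key]) hmpos


lemma E_triangle (hpar : ∀ f g : X → ℝ, 2 * E f + 2 * E g = E (f + g) + E (f - g))
    (hsmul : ∀ (c : ℝ) (f : X → ℝ), E (c • f) = ENNReal.ofReal (c ^ 2) * E f)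
    {a b : X → ℝ} (ha : E a ≠ ⊤) (hb : E b ≠ ⊤) :
    (E (a + b)).toReal
      ≤ (Real.sqrt ((E a).toReal) + Real.sqrt ((E b).toReal)) ^ 2 + (E b).toReal := by
  set α := (E a).toReal with hα_def
  set β := (E b).toReal with hβ_def
  have hαnn : 0 ≤ α := ENNReal.toReal_nonneg
  have hβnn : 0 ≤ β := ENNReal.toReal_nonneg
  set r : ℤ → ℝ≥0∞ := fun n => E (a + (n : ℝ) • b) with hr_def
  have hfin : ∀ n : ℤ, r n ≠ ⊤ := by
    intro n
    have h1 : E (a + (n : ℝ) • b) ≤ 2 * E a + 2 * E ((n : ℝ) • b) := E_add_le hpar _ _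
    have h2 : E ((n : ℝ) • b) = ENNReal.ofReal ((n : ℝ) ^ 2) * E b := hsmul _ _
    refine ne_top_of_le_ne_top ?_ h1
    rw [h2]
    exact (ENNReal.add_ne_top.2 ⟨ENNReal.mul_ne_top (by norm_num) ha,
      ENNReal.mul_ne_top (by norm_num) (ENNReal.mul_ne_top ENNReal.ofReal_ne_top hb)⟩)
  have hrec : ∀ n : ℤ, r (n + 1) + r (n - 1) = 2 * r n + 2 * E b := by
    intro n
    have h := hpar (a + (n : ℝ) • b) b
    have e1 : a + (n : ℝ) • b + b = a + ((n + 1 : ℤ) : ℝ) • b := by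
      funext x
      simp only [Pi.add_apply, Pi.smul_apply, smul_eq_mul]
      push_cast; ring
    have e2 : a + (n : ℝ) • b - b = a + ((n - 1 : ℤ) : ℝ) • b := by
      funext x
      simp only [Pi.add_apply, Pi.sub_apply, Pi.smul_apply, smul_eq_mul]
      push_cast; ring
    rw [e1, e2] at h
    exact h.symm
  set ρ : ℤ → ℝ := fun n => (r n).toReal with hρ_def
  have hρnn : ∀ n : ℤ, 0 ≤ ρ n := fun n => ENNReal.toReal_nonneg
  have hρrec : ∀ n : ℤ, ρ (n + 1) + ρ (n - 1) = 2 * ρ n + 2 * β := by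
    intro n
    have h := congrArg ENNReal.toReal (hrec n)
    rw [ENNReal.toReal_add (hfin _) (hfin _),
      ENNReal.toReal_add (ENNReal.mul_ne_top (by norm_num) (hfin n))
        (ENNReal.mul_ne_top (by norm_num) hb),
      ENNReal.toReal_mul, ENNReal.toReal_mul] at h
    simpa using h
  have hρ0 : ρ 0 = α := by
    simp only [hρ_def, hr_def]
    norm_num
    exact hα_def.symm
  have hρ1 : ρ 1 = (E (a + b)).toReal := by
    simp only [hρ_def, hr_def]
    norm_num
  set c : ℝ := ρ 1 - α - β with hc_def
  have key : ∀ n : ℤ, (ρ n = α + (n : ℝ) * c + (n : ℝ) ^ 2 * β) ∧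
      (ρ (n + 1) = α + ((n + 1 : ℤ) : ℝ) * c + ((n + 1 : ℤ) : ℝ) ^ 2 * β) := by
    intro n
    induction n using Int.induction_on with
    | zero =>
      constructor
      · norm_num [hρ0]
      · norm_num
        rw [hρ1, hc_def, hρ1]
        ring
    | succ k ih =>
      obtain ⟨ih1, ih2⟩ := ih
      refine ⟨ih2, ?_⟩
      have h := hρrec ((k : ℤ) + 1)
      have hstep : ρ ((k : ℤ) + 1 + 1) = 2 * ρ ((k : ℤ) + 1) + 2 * β - ρ k := by
        have e : (k : ℤ) + 1 - 1 = k := by ring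
        rw [e] at h
        linarith
      rw [hstep, ih1, ih2]
      push_cast
      ring
    | pred k ih =>
      obtain ⟨ih1, ih2⟩ := ih
      constructor
      · have h := hρrec (-(k : ℤ))
        have hstep : ρ (-(k : ℤ) - 1) = 2 * ρ (-(k : ℤ)) + 2 * β - ρ (-(k : ℤ) + 1) := by
          linarith
        rw [hstep, ih1, ih2]
        push_cast
        ring
      · rw [show -(k : ℤ) - 1 + 1 = -(k : ℤ) by ring]
        exact ih1
  have hquad : ∀ m : ℕ, 0 ≤ α - m * c + m ^ 2 * β := by
    intro m
    have h := (key (-(m:ℤ))).1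
    have hnn := hρnn (-(m:ℤ))
    rw [h] at hnn
    push_cast at hnn
    nlinarith [hnn]
  have hc_le := quad_bound hαnn hβnn hquad
  have hsq : Real.sqrt α * Real.sqrt β = Real.sqrt (α * β) := (Real.sqrt_mul hαnn β).symm
  have h1 : (E (a + b)).toReal = α + β + c := by rw [← hρ1, hc_def]; ring
  rw [h1]
  have hsqα : Real.sqrt α ^ 2 = α := Real.sq_sqrt hαnn
  have hsqβ : Real.sqrt β ^ 2 = β := Real.sq_sqrt hβnn
  nlinarith [hc_le, hsq, hsqα, hsqβ, Real.sqrt_nonneg α, Real.sqrt_nonneg β]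


lemma med_lip (A B v : ℝ) :
    |max (min A v) (-v) - max (min B v) (-v)| ≤ |A - B| := by
  refine (abs_max_sub_max_le_abs _ _ _).trans ?_
  have := abs_min_sub_min_le_max A v B v
  simpa using this

lemma med_abs_le (a b : ℝ) : |max (min a |b|) (-|b|)| ≤ |a| := by
  rcases le_total a |b| with h1 | h1
  · rcases le_total (-|b|) a with h2 | h2
    · rw [min_eq_left h1, max_eq_left h2]
    · rw [min_eq_left h1, max_eq_right h2, abs_neg, abs_abs]
      rw [abs_le] at *
      constructor <;> nlinarith [abs_nonneg a, abs_nonneg b, neg_abs_le a, le_abs_self a,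
        neg_abs_le b, le_abs_self b]
  · rw [min_eq_right h1, max_eq_left (neg_le_self (abs_nonneg b)), abs_abs]
    exact h1.trans (le_abs_self a)

lemma med_err (a b : ℝ) : |max (min a |b|) (-|b|) - a| ≤ |a - b| := by
  rcases le_total a |b| with h1 | h1
  · rcases le_total (-|b|) a with h2 | h2
    · rw [min_eq_left h1, max_eq_left h2]; simpa using abs_nonneg (a - b)
    · rw [min_eq_left h1, max_eq_right h2]
      have hb : 0 ≤ |b| := abs_nonneg b
      rw [abs_le]
      constructor <;> cases abs_cases b <;> cases abs_cases (a - b) <;> nlinarith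
  · rw [min_eq_right h1, max_eq_left (neg_le_self (abs_nonneg b))]
    have hb : 0 ≤ |b| := abs_nonneg b
    rw [abs_le]
    constructor <;> cases abs_cases b <;> cases abs_cases (a - b) <;> nlinarith

lemma sq_sub_le (A B V : ℝ) (hA : |A| ≤ V) (hB : |B| ≤ V) :
    (A - B) ^ 2 ≤ 4 * V ^ 2 := by
  have h1 : |A - B| ≤ |A| + |B| := abs_sub A B
  nlinarith [abs_nonneg A, abs_nonneg B, abs_nonneg (A - B), sq_abs (A - B),
    le_abs_self A, neg_abs_le A]

lemma med_abs_le_fence (A v : ℝ) (hv : 0 ≤ v) : |max (min A v) (-v)| ≤ v := by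
  rw [abs_le]
  constructor
  · exact le_max_right _ _ |>.trans' (by linarith)
  · exact max_le (min_le_right _ _) (by linarith)

lemma MidClosure.energy_le {μ : Measure X}
    (hpar : ∀ f g : X → ℝ, 2 * E f + 2 * E g = E (f + g) + E (f - g))
    (hsmul : ∀ (c : ℝ) (f : X → ℝ), E (c • f) = ENNReal.ofReal (c ^ 2) * E f)
    {s : Set (X → ℝ)} {M : ℝ≥0∞} (hs : ∀ h ∈ s, E h ≤ M) {h : X → ℝ}
    (hh : MidClosure s h) : E h ≤ M := by
  induction hh with
  | base hb => exact hs _ hb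
  | @mid a b _ _ iha ihb =>
    have h4 : 4 * E ((2⁻¹ : ℝ) • (a + b)) = E (a + b) := E_half hsmul _
    have hab : E (a + b) ≤ 4 * M := by
      calc E (a + b) ≤ 2 * E a + 2 * E b := E_add_le hpar a b
      _ ≤ 2 * M + 2 * M := by gcongr
      _ = 4 * M := by ring
    have : 4 * E ((2⁻¹ : ℝ) • (a + b)) ≤ 4 * M := by rw [h4]; exact hab
    exact (ENNReal.mul_le_mul_iff_right (by norm_num) (by norm_num)).1 this

lemma MidClosure.pointwise {s : Set (X → ℝ)} {f : X → ℝ} {x : X} {c : ℝ}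
    (hs : ∀ p ∈ s, |p x - f x| ≤ c) {h : X → ℝ} (hh : MidClosure s h) :
    |h x - f x| ≤ c := by
  induction hh with
  | base hb => exact hs _ hb
  | @mid a b _ _ iha ihb =>
    have : ((2⁻¹ : ℝ) • (a + b)) x - f x = 2⁻¹ * (a x - f x) + 2⁻¹ * (b x - f x) := by
      simp only [Pi.smul_apply, Pi.add_apply, smul_eq_mul]; ring
    rw [this]
    calc |2⁻¹ * (a x - f x) + 2⁻¹ * (b x - f x)|
        ≤ |2⁻¹ * (a x - f x)| + |2⁻¹ * (b x - f x)| := abs_add_le _ _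
    _ = 2⁻¹ * |a x - f x| + 2⁻¹ * |b x - f x| := by
        rw [abs_mul, abs_mul, abs_of_nonneg (by norm_num : (0:ℝ) ≤ 2⁻¹)]
    _ ≤ 2⁻¹ * c + 2⁻¹ * c := by
        have h2 : (0:ℝ) ≤ 2⁻¹ := by norm_num
        gcongr
    _ = c := by ring

lemma lemmaA {μ : Measure X}
    (hpar : ∀ f g : X → ℝ, 2 * E f + 2 * E g = E (f + g) + E (f - g))
    (hsmul : ∀ (c : ℝ) (f : X → ℝ), E (c • f) = ENNReal.ofReal (c ^ 2) * E f)
    (hcontr : ∀ C : ℝ → ℝ, C 0 = 0 → (∀ x y : ℝ, |C x - C y| ≤ |x - y|) →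
      ∀ f : X → ℝ, E (C ∘ f) ≤ E f)
    (h5 : ∀ (κ : Type v) [Preorder κ] [IsDirected κ (· ≤ ·)] [Nonempty κ]
      (F : κ → X → ℝ) (f : X → ℝ),
      (∀ i, ∫⁻ x, ENNReal.ofReal (F i x ^ 2) ∂μ < ⊤) →
      (∫⁻ x, ENNReal.ofReal (f x ^ 2) ∂μ < ⊤) →
      Tendsto (fun i => ∫⁻ x, ENNReal.ofReal ((F i x - f x) ^ 2) ∂μ) atTop (𝓝 0) →
      E f ≤ liminf (fun i => E (F i)) atTop)
    {Y : ℕ → X → ℝ} {y : X → ℝ} {δ : ℝ≥0∞}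
    (hEY : ∀ j, E (Y j) ≤ δ)
    (hYL2 : ∀ j, ∫⁻ x, ENNReal.ofReal (Y j x ^ 2) ∂μ < ⊤)
    (hyL2 : ∫⁻ x, ENNReal.ofReal (y x ^ 2) ∂μ < ⊤)
    (hae : ∀ᵐ x ∂μ, Tendsto (fun j => Y j x) atTop (𝓝 (y x))) :
    E y ≤ 3 * δ := by
  classical
  set t : ℕ → X → ℝ := fun j x => max (min (y x) |Y j x|) (-|Y j x|) with ht_def
  set m : ℕ → ℕ → X → ℝ := fun j j' x => max (min (Y j' x) |Y j x|) (-|Y j x|) with hm_def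
  have hEv : ∀ j, E (fun x => |Y j x|) ≤ δ := fun j => (E_abs hcontr (Y j)).trans (hEY j)
  -- Energy bound for the doubly-truncated functions
  have hEm : ∀ j j', E (m j j') ≤ 3 * δ := by
    intro j j'
    have h1 : E (fun x => min (Y j' x) |Y j x|) ≤ E (Y j') + E (fun x => |Y j x|) :=
      le_add_self.trans (E_submod hpar hsmul hcontr (Y j') (fun x => |Y j x|))
    have h2 : E (m j j') ≤ E (fun x => min (Y j' x) |Y j x|) + E (-(fun x => |Y j x|)) :=
      le_self_add.trans
        (E_submod hpar hsmul hcontr (fun x => min (Y j' x) |Y j x|) (-(fun x => |Y j x|)))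
    rw [E_neg hsmul] at h2
    calc E (m j j') ≤ (E (Y j') + E (fun x => |Y j x|)) + E (fun x => |Y j x|) :=
          h2.trans (add_le_add_left h1 _)
    _ ≤ (δ + δ) + δ := by gcongr <;> [exact hEY j'; exact hEv j; exact hEv j]
    _ = 3 * δ := by ring
  -- L² bounds
  have hl2m : ∀ j j', ∫⁻ x, ENNReal.ofReal (m j j' x ^ 2) ∂μ < ⊤ := by
    intro j j'
    refine (lintegral_mono fun x => ?_).trans_lt (hYL2 j)
    apply ENNReal.ofReal_le_ofReal
    have h := med_abs_le_fence (Y j' x) |Y j x| (abs_nonneg _)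
    calc m j j' x ^ 2 = |m j j' x| ^ 2 := (sq_abs _).symm
    _ ≤ (|Y j x|) ^ 2 := by nlinarith [abs_nonneg (m j j' x)]
    _ = Y j x ^ 2 := sq_abs _
  have hl2t : ∀ j, ∫⁻ x, ENNReal.ofReal (t j x ^ 2) ∂μ < ⊤ := by
    intro j
    refine (lintegral_mono fun x => ?_).trans_lt hyL2
    apply ENNReal.ofReal_le_ofReal
    have h := med_abs_le (y x) (Y j x)
    calc t j x ^ 2 = |t j x| ^ 2 := (sq_abs _).symm
    _ ≤ (|y x|) ^ 2 := by nlinarith [abs_nonneg (t j x)]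
    _ = y x ^ 2 := sq_abs _
  -- each t j has energy at most 3δ, by L²-lower semicontinuity along j' → ∞
  have hEt : ∀ j, E (t j) ≤ 3 * δ := by
    intro j
    have hconv : Tendsto (fun j' => ∫⁻ x, ENNReal.ofReal ((m j j' x - t j x) ^ 2) ∂μ)
        atTop (𝓝 0) := by
      apply ldct0 (g := fun x => 4 * ENNReal.ofReal (Y j x ^ 2))
      · intro j' x
        have h1 := med_abs_le_fence (Y j' x) |Y j x| (abs_nonneg _)
        have h2 := med_abs_le_fence (y x) |Y j x| (abs_nonneg _)
        have h3 : (m j j' x - t j x) ^ 2 ≤ 4 * (|Y j x|) ^ 2 :=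
          sq_sub_le _ _ _ h1 h2
        calc ENNReal.ofReal ((m j j' x - t j x) ^ 2)
            ≤ ENNReal.ofReal (4 * Y j x ^ 2) := by
              apply ENNReal.ofReal_le_ofReal; rwa [sq_abs] at h3
        _ = 4 * ENNReal.ofReal (Y j x ^ 2) := by
              rw [ENNReal.ofReal_mul (by norm_num)]; norm_num
      · rw [lintegral_const_mul' _ _ (by norm_num)]
        exact ENNReal.mul_lt_top (by norm_num) (hYL2 j)
      · filter_upwards [hae] with x hx
        have hle : ∀ j', ENNReal.ofReal ((m j j' x - t j x) ^ 2)
            ≤ ENNReal.ofReal ((Y j' x - y x) ^ 2) := by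
          intro j'
          apply ENNReal.ofReal_le_ofReal
          have := med_lip (Y j' x) (y x) |Y j x|
          nlinarith [abs_nonneg (m j j' x - t j x), abs_nonneg (Y j' x - y x),
            sq_abs (m j j' x - t j x), sq_abs (Y j' x - y x)]
        have hup : Tendsto (fun j' => ENNReal.ofReal ((Y j' x - y x) ^ 2)) atTop (𝓝 0) := by
          have h1 : Tendsto (fun j' => (Y j' x - y x) ^ 2) atTop (𝓝 0) := by
            have := (hx.sub_const (y x))
            simpa using (this.pow 2)
          simpa using (ENNReal.tendsto_ofReal h1)
        exact tendsto_of_tendsto_of_tendsto_of_le_of_le tendsto_const_nhds hup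
          (fun j' => zero_le) hle
    have := lsc_seq h5 (fun j' => m j j') (t j) (hl2m j) (hl2t j) hconv
    refine this.trans ?_
    calc liminf (fun j' => E (m j j')) atTop
        ≤ liminf (fun _ => 3 * δ) atTop :=
          liminf_le_liminf (Eventually.of_forall fun j' => hEm j j')
    _ = 3 * δ := liminf_const _
  -- now y itself, by L²-lower semicontinuity along j → ∞
  have hconv2 : Tendsto (fun j => ∫⁻ x, ENNReal.ofReal ((t j x - y x) ^ 2) ∂μ)
      atTop (𝓝 0) := by
    apply ldct0 (g := fun x => 4 * ENNReal.ofReal (y x ^ 2))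
    · intro j x
      have h1 := med_abs_le (y x) (Y j x)
      have h3 : (t j x - y x) ^ 2 ≤ 4 * (|y x|) ^ 2 :=
        sq_sub_le _ _ _ h1 (le_refl |y x|)
      calc ENNReal.ofReal ((t j x - y x) ^ 2)
          ≤ ENNReal.ofReal (4 * y x ^ 2) := by
            apply ENNReal.ofReal_le_ofReal; rwa [sq_abs] at h3
      _ = 4 * ENNReal.ofReal (y x ^ 2) := by
            rw [ENNReal.ofReal_mul (by norm_num)]; norm_num
    · rw [lintegral_const_mul' _ _ (by norm_num)]
      exact ENNReal.mul_lt_top (by norm_num) hyL2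
    · filter_upwards [hae] with x hx
      have hle : ∀ j, ENNReal.ofReal ((t j x - y x) ^ 2)
          ≤ ENNReal.ofReal ((y x - Y j x) ^ 2) := by
        intro j
        apply ENNReal.ofReal_le_ofReal
        have := med_err (y x) (Y j x)
        nlinarith [abs_nonneg (t j x - y x), abs_nonneg (y x - Y j x),
          sq_abs (t j x - y x), sq_abs (y x - Y j x)]
      have hup : Tendsto (fun j => ENNReal.ofReal ((y x - Y j x) ^ 2)) atTop (𝓝 0) := by
        have h1 : Tendsto (fun j => (y x - Y j x) ^ 2) atTop (𝓝 0) := by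
          have := (hx.const_sub (y x))
          simpa using (this.pow 2)
        simpa using (ENNReal.tendsto_ofReal h1)
      exact tendsto_of_tendsto_of_tendsto_of_le_of_le tendsto_const_nhds hup
        (fun j => zero_le) hle
  have := lsc_seq h5 t y hl2t hyL2 hconv2
  refine this.trans ?_
  calc liminf (fun j => E (t j)) atTop
      ≤ liminf (fun _ => 3 * δ) atTop := liminf_le_liminf (Eventually.of_forall hEt)
  _ = 3 * δ := liminf_const _


end DirForm



/-- Dirichlet forms are lower semicontinuous on their domain with respect to
local convergence in measure. -/
theorem stmt_5 {X : Type*} [MeasurableSpace X] (μ : Measure X) [SigmaFinite μ]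
    (E : (X → ℝ) → ℝ≥0∞) (hE : IsDirichletForm μ E)
    (ι : Type*) [Preorder ι] [IsDirected ι (· ≤ ·)] [Nonempty ι]
    (F : ι → X → ℝ) (f : X → ℝ)
    (hF : ∀ i, E (F i) < ⊤) (hf : E f < ⊤)
    (hconv : TendstoLocInMeasure μ atTop F f) :
    E f ≤ liminf (fun i => E (F i)) atTop := by
  classical
  obtain ⟨haeq, hpar, hsmul, hL2, h5, hcontr⟩ := hE
  by_contra hlt
  push_neg at hlt
  obtain ⟨M, hLM, hMf⟩ := exists_between hlt
  have hMtop : M ≠ ⊤ := (hMf.trans hf).ne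
  -- Step A: extract a sequence g with E (g n) < M converging to f a.e.
  have hfreq : ∃ᶠ i in (atTop : Filter ι), E (F i) < M := frequently_lt_of_liminf_lt (by isBoundedDefault) hLM
  have hev : ∀ n : ℕ, ∀ᶠ i in (atTop : Filter ι), ∀ m ∈ Finset.range (n + 1),
      μ (spanningSets μ m ∩ {x | (1 / (n + 1) : ℝ) ≤ |F i x - f x|}) ≤ (2⁻¹ : ℝ≥0∞) ^ n := by
    intro n
    rw [Filter.eventually_all_finset]
    intro m _
    have h := hconv (spanningSets μ m) (measurableSet_spanningSets μ m)
      (measure_spanningSets_lt_top μ m) (1 / (n + 1)) (by positivity)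
    exact (ENNReal.tendsto_nhds_zero.1 h) _
      (ENNReal.pow_pos (by norm_num) n)
  have hsel : ∀ n : ℕ, ∃ i, E (F i) < M ∧ ∀ m ∈ Finset.range (n + 1),
      μ (spanningSets μ m ∩ {x | (1 / (n + 1) : ℝ) ≤ |F i x - f x|}) ≤ (2⁻¹ : ℝ≥0∞) ^ n :=
    fun n => ((hfreq.and_eventually (hev n)).exists)
  choose I hI1 hI2 using hsel
  set g : ℕ → X → ℝ := fun n => F (I n) with hg_def
  -- a.e. convergence of g to f
  set A : ℕ → ℕ → Set X :=
    fun m n => spanningSets μ m ∩ {x | (1 / (n + 1) : ℝ) ≤ |g n x - f x|} with hA_def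
  have hA : ∀ m n, m ≤ n → μ (A m n) ≤ (2⁻¹ : ℝ≥0∞) ^ n :=
    fun m n hmn => hI2 n m (Finset.mem_range.2 (Nat.lt_succ_of_le hmn))
  set Zm : ℕ → Set X := fun m => ⋂ N : ℕ, ⋃ n : ℕ, A m (N + m + n) with hZm_def
  have hZ : ∀ m, μ (Zm m) = 0 := by
    intro m
    have hbound : ∀ N : ℕ, μ (Zm m) ≤ (2⁻¹ : ℝ≥0∞) ^ (N + m) * 2 := by
      intro N
      calc μ (Zm m) ≤ μ (⋃ n, A m (N + m + n)) := measure_mono (Set.iInter_subset _ N)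
      _ ≤ ∑' n, μ (A m (N + m + n)) := measure_iUnion_le _
      _ ≤ ∑' n : ℕ, (2⁻¹ : ℝ≥0∞) ^ (N + m + n) :=
          ENNReal.tsum_le_tsum (fun n => hA m (N + m + n) (by omega))
      _ = (2⁻¹ : ℝ≥0∞) ^ (N + m) * ∑' n : ℕ, (2⁻¹ : ℝ≥0∞) ^ n := by
          rw [← ENNReal.tsum_mul_left]
          congr 1
          funext n
          rw [pow_add]
      _ = (2⁻¹ : ℝ≥0∞) ^ (N + m) * 2 := by
          rw [ENNReal.tsum_geometric, ENNReal.one_sub_inv_two, inv_inv]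
    have htend : Tendsto (fun N : ℕ => (2⁻¹ : ℝ≥0∞) ^ (N + m) * 2) atTop (𝓝 0) := by
      have h := ENNReal.tendsto_pow_atTop_nhds_zero_of_lt_one (by norm_num : (2⁻¹ : ℝ≥0∞) < 1)
      have h2 := ENNReal.Tendsto.mul_const h (Or.inr (by norm_num : (2:ℝ≥0∞) ≠ ⊤))
      rw [zero_mul] at h2
      exact h2.comp (tendsto_add_atTop_nat m)
    have hle0 : μ (Zm m) ≤ 0 := ge_of_tendsto htend (Eventually.of_forall hbound)
    exact le_antisymm hle0 zero_le
  have hgood : ∀ x, x ∉ (⋃ m, Zm m) → Tendsto (fun n => g n x) atTop (𝓝 (f x)) := by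
    intro x hx
    obtain ⟨m, hxm⟩ : ∃ m, x ∈ spanningSets μ m := by
      have h := iUnion_spanningSets μ
      have : x ∈ ⋃ m, spanningSets μ m := by rw [h]; trivial
      exact Set.mem_iUnion.1 this
    have hxZ : x ∉ Zm m := fun h => hx (Set.mem_iUnion.2 ⟨m, h⟩)
    rw [hZm_def] at hxZ
    simp only [Set.mem_iInter, Set.mem_iUnion, not_forall, not_exists] at hxZ
    obtain ⟨N, hN⟩ := hxZ
    have hsmall : ∀ n : ℕ, |g (N + m + n) x - f x| < 1 / (N + m + n + 1) := by
      intro n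
      have h := hN n
      rw [hA_def] at h
      simp only [Set.mem_inter_iff, Set.mem_setOf_eq, not_and, not_le] at h
      have := h hxm
      push_cast at this ⊢
      convert this using 2 <;> push_cast <;> ring
    have hz : Tendsto (fun n : ℕ => g n x - f x) atTop (𝓝 0) := by
      apply squeeze_zero_norm' (a := fun n : ℕ => (1 : ℝ) / (n + 1))
      · rw [eventually_atTop]
        refine ⟨N + m, fun k hk => ?_⟩
        obtain ⟨n, rfl⟩ := Nat.exists_eq_add_of_le hk
        exact (le_of_lt (by exact_mod_cast hsmall n))
      · exact tendsto_one_div_add_atTop_nhds_zero_nat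
    have := hz.add_const (f x)
    simpa using this
  have hgae : ∀ᵐ x ∂μ, Tendsto (fun n => g n x) atTop (𝓝 (f x)) := by
    have hnull : μ (⋃ m, Zm m) = 0 := measure_iUnion_null hZ
    have hsub : {x | ¬ Tendsto (fun n => g n x) atTop (𝓝 (f x))} ⊆ ⋃ m, Zm m := by
      intro x hx
      by_contra hxx
      exact hx (hgood x hxx)
    rw [ae_iff]
    exact measure_mono_null hsub hnull
  -- Step B/C: for every ε > 0, a quantitative bound on (E f).toReal
  have hfL2 : ∫⁻ x, ENNReal.ofReal (f x ^ 2) ∂μ < ⊤ := hL2 f hf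
  have key : ∀ ε : ℝ, 0 < ε →
      (E f).toReal ≤ (Real.sqrt (M.toReal + ε) + Real.sqrt (18 * ε)) ^ 2 + 18 * ε := by
    intro ε hε
    set ε' : ℝ≥0∞ := ENNReal.ofReal ε with hε'_def
    have hε'0 : ε' ≠ 0 := (ENNReal.ofReal_pos.2 hε).ne'
    have hε'top : ε' ≠ ⊤ := ENNReal.ofReal_ne_top
    set S : ℕ → Set (X → ℝ) := fun n => {p | ∃ m, n ≤ m ∧ p = g m} with hS_def
    have hSsub : ∀ k j, k ≤ j → S j ⊆ S k := by
      intro k j hkj p hp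
      obtain ⟨m, hm, rfl⟩ := hp
      exact ⟨m, hkj.trans hm, rfl⟩
    have hSE : ∀ n, ∀ p ∈ S n, E p ≤ M := by
      rintro n p ⟨m, _, rfl⟩
      exact (hI1 m).le
    have hME : ∀ n (p : X → ℝ), MidClosure (S n) p → E p ≤ M :=
      fun n p hp => MidClosure.energy_le (μ := μ) hpar hsmul (hSE n) hp
    set D : ℕ → ℝ≥0∞ := fun n => ⨅ p : {q : X → ℝ // MidClosure (S n) q}, E p.1 with hD_def
    have hDM : ∀ n, D n ≤ M := by
      intro n
      have h1 : D n ≤ E (g n) :=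
        iInf_le _ (⟨g n, MidClosure.base ⟨n, le_refl n, rfl⟩⟩ : {q // MidClosure (S n) q})
      exact h1.trans (hI1 n).le
    have hDmono : ∀ k j, k ≤ j → D k ≤ D j := by
      intro k j hkj
      refine le_iInf fun p => ?_
      exact iInf_le _ (⟨p.1, p.2.mono (hSsub k j hkj)⟩ : {q // MidClosure (S k) q})
    have hsel2 : ∀ n, ∃ p : X → ℝ, MidClosure (S n) p ∧ E p ≤ D n + ε' := by
      intro n
      have hlt : D n < D n + ε' :=
        ENNReal.lt_add_right ((hDM n).trans_lt hMtop.lt_top).ne hε'0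
      obtain ⟨p, hp⟩ := iInf_lt_iff.1 hlt
      exact ⟨p.1, p.2, hp.le⟩
    choose h hhS hhE using hsel2
    set Dsup : ℝ≥0∞ := ⨆ n, D n with hDsup_def
    have hDsupM : Dsup ≤ M := iSup_le hDM
    have hDsuptop : Dsup ≠ ⊤ := (hDsupM.trans_lt hMtop.lt_top).ne
    have hkex : ∃ k, Dsup ≤ D k + ε' := by
      rcases le_or_gt Dsup ε' with hcase | hcase
      · exact ⟨0, hcase.trans le_add_self⟩
      · have hsub : Dsup - ε' < Dsup :=
          ENNReal.sub_lt_self hDsuptop (by intro h0; rw [h0] at hcase; exact (not_lt.2 (zero_le (a := ε'))) hcase) hε'0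
        obtain ⟨k, hk⟩ := lt_iSup_iff.1 hsub
        exact ⟨k, tsub_le_iff_right.1 hk.le⟩
    obtain ⟨k, hk⟩ := hkex
    have hCauchy : ∀ j, k ≤ j → E (h j - h k) ≤ 6 * ε' := by
      intro j hkj
      have hmidS : MidClosure (S k) ((2⁻¹ : ℝ) • (h j + h k)) :=
        MidClosure.mid ((hhS j).mono (hSsub k j hkj)) (hhS k)
      have hDk_mid : D k ≤ E ((2⁻¹ : ℝ) • (h j + h k)) :=
        iInf_le _ (⟨_, hmidS⟩ : {q // MidClosure (S k) q})
      have hid : E (h j - h k) + 4 * E ((2⁻¹ : ℝ) • (h j + h k))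
          = 2 * E (h j) + 2 * E (h k) := by
        rw [E_half hsmul, add_comm, ← hpar]
      have hle : E (h j - h k) + 4 * D k ≤ 2 * E (h j) + 2 * E (h k) := by
        rw [← hid]
        gcongr
      have hub : 2 * E (h j) + 2 * E (h k) ≤ 6 * ε' + 4 * D k := by
        calc 2 * E (h j) + 2 * E (h k) ≤ 2 * (D j + ε') + 2 * (D k + ε') := by
              gcongr
              · exact hhE j
              · exact hhE k
        _ ≤ 2 * (Dsup + ε') + 2 * (D k + ε') := by
              gcongr
              exact le_iSup D j
        _ ≤ 2 * ((D k + ε') + ε') + 2 * (D k + ε') := by gcongr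
        _ = 6 * ε' + 4 * D k := by ring
      have hfin4 : 4 * D k ≠ ⊤ :=
        ENNReal.mul_ne_top (by norm_num) ((hDM k).trans_lt hMtop.lt_top).ne
      exact (ENNReal.add_le_add_iff_right hfin4).1 (hle.trans hub)
    -- a.e. convergence of (h n) to f
    have hhae : ∀ᵐ x ∂μ, Tendsto (fun n => h n x) atTop (𝓝 (f x)) := by
      filter_upwards [hgae] with x hx
      rw [Metric.tendsto_atTop] at hx ⊢
      intro d hd
      obtain ⟨n₀, hn₀⟩ := hx (d / 2) (by linarith)
      refine ⟨n₀, fun n hn => ?_⟩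
      have hbd : ∀ p ∈ S n, |p x - f x| ≤ d / 2 := by
        rintro p ⟨m, hm, rfl⟩
        have := hn₀ m (hn.trans hm)
        rw [Real.dist_eq] at this
        exact this.le
      have := MidClosure.pointwise hbd (hhS n)
      rw [Real.dist_eq]
      linarith
    -- feed Lemma A
    have hEhk : E (h k) ≤ M + ε' := (hhE k).trans (add_le_add_left (hDM k) ε')
    have hEhk_fin : E (h k) ≠ ⊤ :=
      (hEhk.trans_lt (ENNReal.add_lt_top.2 ⟨hMtop.lt_top, hε'top.lt_top⟩)).ne
    have hhL2 : ∀ n, ∫⁻ x, ENNReal.ofReal (h n x ^ 2) ∂μ < ⊤ :=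
      fun n => hL2 _ (((hhE n).trans_lt (ENNReal.add_lt_top.2
        ⟨(hDM n).trans_lt hMtop.lt_top, hε'top.lt_top⟩)))
    have hEY : ∀ j : ℕ, E (h (k + j) - h k) ≤ 6 * ε' :=
      fun j => hCauchy (k + j) (Nat.le_add_right k j)
    have hYfin : ∀ j : ℕ, E (h (k + j) - h k) < ⊤ :=
      fun j => (hEY j).trans_lt (ENNReal.mul_lt_top (by norm_num) hε'top.lt_top)
    have hYL2 : ∀ j : ℕ, ∫⁻ x, ENNReal.ofReal ((h (k + j) - h k) x ^ 2) ∂μ < ⊤ :=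
      fun j => hL2 _ (hYfin j)
    have hyE : E (f - h k) < ⊤ := by
      have h1 : E (f - h k) ≤ 2 * E f + 2 * E (-(h k)) := by
        have : f - h k = f + (-(h k)) := by funext x; simp [sub_eq_add_neg]
        rw [this]
        exact E_add_le hpar f (-(h k))
      rw [E_neg hsmul] at h1
      exact h1.trans_lt (ENNReal.add_lt_top.2
        ⟨ENNReal.mul_lt_top (by norm_num) hf,
         ENNReal.mul_lt_top (by norm_num) hEhk_fin.lt_top⟩)
    have hyL2 : ∫⁻ x, ENNReal.ofReal ((f - h k) x ^ 2) ∂μ < ⊤ := hL2 _ hyE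
    have hae2 : ∀ᵐ x ∂μ, Tendsto (fun j => (h (k + j) - h k) x) atTop (𝓝 ((f - h k) x)) := by
      filter_upwards [hhae] with x hx
      have h1 : Tendsto (fun j => h (j + k) x) atTop (𝓝 (f x)) :=
        hx.comp (tendsto_add_atTop_nat k)
      have h2 : Tendsto (fun j => h (k + j) x) atTop (𝓝 (f x)) := by
        simpa [Nat.add_comm] using h1
      simpa using h2.sub_const (h k x)
    have hyEy : E (f - h k) ≤ 3 * (6 * ε') :=
      lemmaA hpar hsmul hcontr h5 hEY hYL2 hyL2 hae2
    -- triangle inequality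
    have htr := E_triangle hpar hsmul hEhk_fin hyE.ne
    have hsum : h k + (f - h k) = f := by funext x; simp
    rw [hsum] at htr
    -- numeric estimates
    have hα : (E (h k)).toReal ≤ M.toReal + ε := by
      have h1 : (E (h k)).toReal ≤ (M + ε').toReal :=
        ENNReal.toReal_mono (ENNReal.add_ne_top.2 ⟨hMtop, hε'top⟩) hEhk
      rwa [ENNReal.toReal_add hMtop hε'top, ENNReal.toReal_ofReal hε.le] at h1
    have hβ : (E (f - h k)).toReal ≤ 18 * ε := by
      have h18 : (3 : ℝ≥0∞) * (6 * ε') = ENNReal.ofReal (18 * ε) := by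
        rw [ENNReal.ofReal_mul (by norm_num)]
        rw [show ENNReal.ofReal (18:ℝ) = (18:ℝ≥0∞) by norm_num]
        rw [← hε'_def]
        ring
      have h1 : (E (f - h k)).toReal ≤ (ENNReal.ofReal (18 * ε)).toReal :=
        ENNReal.toReal_mono ENNReal.ofReal_ne_top (h18 ▸ hyEy)
      rwa [ENNReal.toReal_ofReal (by positivity)] at h1
    have hmono : (Real.sqrt ((E (h k)).toReal) + Real.sqrt ((E (f - h k)).toReal)) ^ 2
          + (E (f - h k)).toReal
        ≤ (Real.sqrt (M.toReal + ε) + Real.sqrt (18 * ε)) ^ 2 + 18 * ε := by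
      have hs1 : Real.sqrt ((E (h k)).toReal) ≤ Real.sqrt (M.toReal + ε) :=
        Real.sqrt_le_sqrt hα
      have hs2 : Real.sqrt ((E (f - h k)).toReal) ≤ Real.sqrt (18 * ε) :=
        Real.sqrt_le_sqrt hβ
      have hnn : 0 ≤ Real.sqrt ((E (h k)).toReal) + Real.sqrt ((E (f - h k)).toReal) := by
        positivity
      gcongr <;> first | exact hs1 | exact hs2 | exact hβ | positivity
    exact htr.trans hmono
  -- pass to the limit ε → 0⁺
  have hEfM : (E f).toReal ≤ M.toReal := by
    have hcont : Tendsto (fun ε : ℝ => (Real.sqrt (M.toReal + ε) + Real.sqrt (18 * ε)) ^ 2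
        + 18 * ε) (𝓝[>] (0:ℝ)) (𝓝 (M.toReal)) := by
      have hc : Continuous (fun ε : ℝ => (Real.sqrt (M.toReal + ε) + Real.sqrt (18 * ε)) ^ 2
          + 18 * ε) := by
        continuity
      have h0 := (hc.tendsto 0).mono_left (nhdsWithin_le_nhds (s := Set.Ioi (0:ℝ)))
      simpa [Real.sq_sqrt ENNReal.toReal_nonneg] using h0
    refine ge_of_tendsto hcont ?_
    filter_upwards [self_mem_nhdsWithin] with ε hε
    exact key ε hε
  have hcontr2 : E f ≤ M := (ENNReal.toReal_le_toReal hf.ne hMtop).1 hEfM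
  exact absurd hcontr2 (not_le.2 hMf)
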